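/- For n ≥ 1, the number of Stirling permutations σ in Q_{n+1}^{(0)} with even(σ) odd equals the number with even(σ) even, and both equal 2^{n-1}·n!. -/

import Mathlib

/-- A Stirling permutation of the multiset `{1, 2², 3², …, (n+1)²}` (the element `1`
appears once, every other element twice). -/
def IsStirling0 (n : ℕ) (σ : List ℕ) : Prop :=
  (∀ m : ℕ, σ.count m = if m = 1 then 1 else if 2 ≤ m ∧ m ≤ n + 1 then 2 else 0) ∧
  (∀ i s j : ℕ, i < s → s < j → j < σ.length →
    σ.getD i 0 = σ.getD j 0 → σ.getD i 0 < σ.getD s 0)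

/-- Entry of `σ` in 1-based indexing, with the boundary convention `σ_0 = 0`. -/
def ent (σ : List ℕ) (i : ℕ) : ℕ := if i = 0 then 0 else σ.getD (i - 1) 0

/-- Number of ascent-plateaux: indices `2 ≤ i` with `σ_{i-1} < σ_i = σ_{i+1}`. -/
def apQ (σ : List ℕ) : ℕ :=
  ((Finset.Icc 2 (σ.length - 1)).filter fun i =>
    ent σ (i - 1) < ent σ i ∧ ent σ i = ent σ (i + 1)).card

/-- Number of left ascent-plateaux: indices `1 ≤ i` with `σ_{i-1} < σ_i = σ_{i+1}`,
where `σ_0 = 0`. -/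
def lapQ (σ : List ℕ) : ℕ :=
  ((Finset.Icc 1 (σ.length - 1)).filter fun i =>
    ent σ (i - 1) < ent σ i ∧ ent σ i = ent σ (i + 1)).card

/-- Number of even values of `σ`: values `v ∈ {2,…,n+1}` whose first occurrence in `σ`
is at an even (1-based) position. -/
def evenS (n : ℕ) (σ : List ℕ) : ℕ :=
  ((Finset.Icc 2 (n + 1)).filter fun v => σ.idxOf v % 2 = 1).card


def ins (v g : ℕ) (σ : List ℕ) : List ℕ := σ.take g ++ v :: v :: σ.drop g

lemma count_ins (v g m : ℕ) (σ : List ℕ) :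
    (ins v g σ).count m = σ.count m + if v = m then 2 else 0 := by
  rw [show σ.count m = (σ.take g ++ σ.drop g).count m by rw [List.take_append_drop]]
  simp only [ins, List.count_append, List.count_cons]
  simp only [beq_iff_eq]
  split_ifs <;> omega

lemma length_ins (v g : ℕ) (σ : List ℕ) (h : g ≤ σ.length) :
    (ins v g σ).length = σ.length + 2 := by
  simp [ins]; omega

lemma getD_ins (v g k : ℕ) (σ : List ℕ) (hg : g ≤ σ.length) :
    (ins v g σ).getD k 0 =
      if k < g then σ.getD k 0 else if k < g + 2 then v else σ.getD (k - 2) 0 := by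
  unfold ins
  split_ifs with h1 h2
  · rw [List.getD_append _ _ _ _ (by simp; omega)]
    rcases Nat.lt_or_ge k σ.length with h | h
    · rw [List.getD_eq_getElem _ _ (by simp; omega), List.getD_eq_getElem _ _ h]
      simp [List.getElem_take]
    · omega
  · rw [List.getD_append_right _ _ _ _ (by simp; omega)]
    have : k - (σ.take g).length = k - g := by simp; omega
    rw [this]
    have h3 : k - g = 0 ∨ k - g = 1 := by omega
    rcases h3 with h3 | h3 <;> rw [h3] <;> rfl
  · rw [List.getD_append_right _ _ _ _ (by simp; omega)]
    have hlen : (σ.take g).length = g := by simp; omega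
    rw [hlen]
    have h3 : k - g = (k - g - 2) + 2 := by omega
    rw [h3]
    simp only [List.getD_cons_succ]
    rcases Nat.lt_or_ge (k - 2) σ.length with h | h
    · rw [List.getD_eq_getElem _ _ (by simp; omega), List.getD_eq_getElem _ _ h]
      simp [List.getElem_drop]
      congr 1; omega
    · rw [List.getD_eq_default _ _ (by simp; omega), List.getD_eq_default _ _ (by omega)]

lemma indexOf_ins_self (v g : ℕ) (σ : List ℕ) (hv : v ∉ σ) :
    (ins v g σ).idxOf v = min g σ.length := by
  unfold ins
  rw [List.idxOf_append_of_notMem (fun h => hv (List.mem_of_mem_take h))]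
  simp [List.idxOf_cons_self]

lemma indexOf_ins_ne (v g x : ℕ) (σ : List ℕ) (hx : x ≠ v) (hmem : x ∈ σ) :
    (ins v g σ).idxOf x =
      if σ.idxOf x < g then σ.idxOf x else σ.idxOf x + 2 := by
  induction σ generalizing g with
  | nil => simp at hmem
  | cons a l ih =>
    cases g with
    | zero =>
      simp only [ins, List.take_zero, List.drop_zero, List.nil_append]
      rw [List.idxOf_cons_ne _ (fun h => hx h.symm), List.idxOf_cons_ne _ (fun h => hx h.symm)]
      simp
    | succ g =>
      by_cases hax : a = x
      · subst hax
        simp only [ins, List.take_succ_cons, List.drop_succ_cons, List.cons_append]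
        rw [List.idxOf_cons_self, List.idxOf_cons_self]
        simp
      · simp only [ins, List.take_succ_cons, List.drop_succ_cons, List.cons_append]
        rw [List.idxOf_cons_ne _ hax, List.idxOf_cons_ne _ hax]
        have hmem' : x ∈ l := by rcases List.mem_cons.1 hmem with h | h; exact absurd h.symm hax; exact h
        have := ih g hmem'
        unfold ins at this
        rw [this]
        split_ifs <;> omega


lemma sum_counts (n : ℕ) :
    ∑ m ∈ Finset.range (n + 2), (if m = 1 then 1 else if 2 ≤ m ∧ m ≤ n + 1 then 2 else 0) =
      2 * n + 1 := by
  induction n with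
  | zero => decide
  | succ n ih =>
    rw [Finset.sum_range_succ]
    have : ∑ m ∈ Finset.range (n + 2),
        (if m = 1 then 1 else if 2 ≤ m ∧ m ≤ n + 2 then 2 else 0) =
        ∑ m ∈ Finset.range (n + 2),
        (if m = 1 then 1 else if 2 ≤ m ∧ m ≤ n + 1 then 2 else 0) := by
      apply Finset.sum_congr rfl
      intro m hm
      simp only [Finset.mem_range] at hm
      split_ifs <;> omega
    rw [this, ih]
    split_ifs <;> omega

lemma stirling_length {n : ℕ} {σ : List ℕ} (h : IsStirling0 n σ) :
    σ.length = 2 * n + 1 := by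
  have h1 : σ.length = ∑ m ∈ σ.toFinset, σ.count m := by
    have := Multiset.toFinset_sum_count_eq (↑σ : Multiset ℕ)
    simpa using this.symm
  have hsub : σ.toFinset ⊆ Finset.range (n + 2) := by
    intro m hm
    rw [List.mem_toFinset] at hm
    have := h.1 m
    have hc : 0 < σ.count m := List.count_pos_iff.2 hm
    rw [this] at hc
    simp only [Finset.mem_range]
    split_ifs at hc <;> omega
  have h2 : ∑ m ∈ σ.toFinset, σ.count m = ∑ m ∈ Finset.range (n + 2), σ.count m := by
    apply Finset.sum_subset hsub
    intro m _ hm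
    rw [List.mem_toFinset] at hm
    exact List.count_eq_zero.2 hm
  rw [h1, h2]
  calc ∑ m ∈ Finset.range (n + 2), σ.count m
      = ∑ m ∈ Finset.range (n + 2), (if m = 1 then 1 else if 2 ≤ m ∧ m ≤ n + 1 then 2 else 0) :=
        Finset.sum_congr rfl (fun m _ => h.1 m)
    _ = 2 * n + 1 := sum_counts n

lemma stirling_mem_le {n : ℕ} {σ : List ℕ} (h : IsStirling0 n σ) {x : ℕ} (hx : x ∈ σ) :
    x ≤ n + 1 := by
  have hc : 0 < σ.count x := List.count_pos_iff.2 hx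
  rw [h.1 x] at hc
  split_ifs at hc <;> omega

lemma stirling_not_mem {n : ℕ} {σ : List ℕ} (h : IsStirling0 n σ) : n + 2 ∉ σ := by
  intro hx
  have := stirling_mem_le h hx
  omega

lemma getD_mem (σ : List ℕ) (k : ℕ) (hk : k < σ.length) : σ.getD k 0 ∈ σ := by
  rw [List.getD_eq_getElem _ _ hk]
  exact List.getElem_mem hk

lemma stirling_ins {n g : ℕ} {σ : List ℕ} (h : IsStirling0 n σ) (hg : g ≤ 2 * n + 1) :
    IsStirling0 (n + 1) (ins (n + 2) g σ) := by
  have hlen := stirling_length h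
  have hgl : g ≤ σ.length := by omega
  constructor
  · intro m
    rw [count_ins, h.1 m]
    split_ifs <;> omega
  · intro i s j h1 h2 h3 h4
    rw [length_ins _ _ _ hgl] at h3
    have hGb : ∀ k, g ≤ k → k < g + 2 → (ins (n + 2) g σ).getD k 0 = n + 2 := by
      intro k hk1 hk2
      rw [getD_ins _ _ _ _ hgl]
      split_ifs <;> first | rfl | omega
    have hG : ∀ k, ¬(g ≤ k ∧ k < g + 2) →
        (ins (n + 2) g σ).getD k 0 = σ.getD (if k < g then k else k - 2) 0 := by
      intro k hk
      rw [getD_ins _ _ _ _ hgl]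
      split_ifs <;> first | rfl | omega
    by_cases hib : g ≤ i ∧ i < g + 2
    · by_cases hjb : g ≤ j ∧ j < g + 2
      · omega
      · rw [hGb i hib.1 hib.2, hG j hjb] at h4
        have hjlt : (if j < g then j else j - 2) < σ.length := by split_ifs <;> omega
        have hm := getD_mem _ _ hjlt
        rw [← h4] at hm
        exact absurd hm (stirling_not_mem h)
    · by_cases hjb : g ≤ j ∧ j < g + 2
      · rw [hGb j hjb.1 hjb.2, hG i hib] at h4
        have hilt : (if i < g then i else i - 2) < σ.length := by split_ifs <;> omega
        have hm := getD_mem _ _ hilt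
        rw [h4] at hm
        exact absurd hm (stirling_not_mem h)
      · by_cases hsb : g ≤ s ∧ s < g + 2
        · rw [hG i hib, hGb s hsb.1 hsb.2]
          have hilt : (if i < g then i else i - 2) < σ.length := by split_ifs <;> omega
          have := stirling_mem_le h (getD_mem _ _ hilt)
          omega
        · rw [hG i hib, hG s hsb]
          rw [hG i hib, hG j hjb] at h4
          apply h.2 _ _ _ ?_ ?_ ?_ h4 <;> split_ifs <;> omega

lemma exists_prefix {v : ℕ} : ∀ {τ : List ℕ}, v ∈ τ → ∃ A B, τ = A ++ v :: B ∧ v ∉ A := by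
  intro τ hv
  induction τ with
  | nil => simp at hv
  | cons a l ih =>
    by_cases hav : a = v
    · exact ⟨[], l, by simp [hav], by simp⟩
    · rcases List.mem_cons.1 hv with h | h
      · exact absurd h.symm hav
      · obtain ⟨A, B, hAB, hvA⟩ := ih h
        refine ⟨a :: A, B, by rw [List.cons_append, hAB], ?_⟩
        simp only [List.mem_cons, not_or]
        exact ⟨fun h => hav h.symm, hvA⟩

lemma stirling_split {n : ℕ} {τ : List ℕ} (h : IsStirling0 (n + 1) τ) :
    ∃ σ g, IsStirling0 n σ ∧ g ≤ 2 * n + 1 ∧ τ = ins (n + 2) g σ := by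
  have hlenτ := stirling_length h
  have hcv : τ.count (n + 2) = 2 := by rw [h.1]; split_ifs <;> omega
  have hvmem : (n + 2) ∈ τ := List.count_pos_iff.1 (by omega)
  obtain ⟨A, B, hAB, hvA⟩ := exists_prefix hvmem
  have hcB : B.count (n + 2) = 1 := by
    have := hcv
    rw [hAB, List.count_append, List.count_cons, List.count_eq_zero.2 hvA] at this
    simp at this
    omega
  have hvB : (n + 2) ∈ B := List.count_pos_iff.1 (by omega)
  obtain ⟨C, D, hCD, hvC⟩ := exists_prefix hvB
  have hC : C = [] := by
    by_contra hCne
    obtain ⟨c, C', hc⟩ := List.exists_cons_of_ne_nil hCne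
    have hτ : τ = A ++ (n + 2) :: (C ++ (n + 2) :: D) := by rw [hAB, hCD]
    have hi : τ.getD A.length 0 = n + 2 := by
      rw [hτ, List.getD_append_right _ _ _ _ le_rfl]
      simp
    have hj : τ.getD (A.length + 1 + C.length) 0 = n + 2 := by
      rw [hτ, List.getD_append_right _ _ _ _ (by omega)]
      have : A.length + 1 + C.length - A.length = C.length + 1 := by omega
      rw [this]
      simp only [List.getD_cons_succ]
      rw [List.getD_append_right _ _ _ _ le_rfl]
      simp
    have hjlt : A.length + 1 + C.length < τ.length := by
      rw [hτ]; simp [hc]; try omega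
    have hslt : A.length + 1 < τ.length := by
      rw [hτ] at hjlt ⊢; simp [hc] at hjlt ⊢; try omega
    have hsmem : τ.getD (A.length + 1) 0 ∈ τ := getD_mem _ _ hslt
    have hle := stirling_mem_le h hsmem
    have := h.2 A.length (A.length + 1) (A.length + 1 + C.length)
      (by omega) (by simp [hc]; try omega) hjlt (by rw [hi, hj])
    rw [hi] at this
    omega
  subst hC
  simp only [List.nil_append] at hCD
  have hτ : τ = ins (n + 2) A.length (A ++ D) := by
    rw [hAB, hCD]
    unfold ins
    rw [List.take_left, List.drop_left]
  set σ := A ++ D with hσ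
  have hτlen : τ.length = σ.length + 2 := by rw [hAB, hCD, hσ]; simp; omega
  have hgl : A.length ≤ σ.length := by rw [hσ]; simp
  have hσlen : σ.length = 2 * n + 1 := by omega
  refine ⟨σ, A.length, ⟨?_, ?_⟩, by omega, hτ⟩
  · intro m
    have hcm := h.1 m
    rw [hτ, count_ins] at hcm
    split_ifs at hcm ⊢ <;> omega
  · intro i s j h1 h2 h3 h4
    have hL : ∀ k, σ.getD k 0 = τ.getD (if k < A.length then k else k + 2) 0 := by
      intro k
      by_cases hk : k < A.length
      · rw [if_pos hk, hτ, getD_ins _ _ _ _ hgl, if_pos hk]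
      · rw [if_neg hk, hτ, getD_ins _ _ _ _ hgl,
          if_neg (by omega : ¬ k + 2 < A.length), if_neg (by omega : ¬ k + 2 < A.length + 2)]
        congr 1
    rw [hL i, hL s]
    rw [hL i, hL j] at h4
    apply h.2 _ _ _ ?_ ?_ ?_ h4 <;> split_ifs <;> omega

lemma ins_take (v g : ℕ) (σ : List ℕ) (hg : g ≤ σ.length) :
    (ins v g σ).take g = σ.take g := by
  have hl : (σ.take g).length = g := by simp; omega
  rw [ins, List.take_append, hl]
  simp

lemma ins_drop (v g : ℕ) (σ : List ℕ) (hg : g ≤ σ.length) :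
    (ins v g σ).drop (g + 2) = σ.drop g := by
  have hl : (σ.take g).length = g := by simp; omega
  rw [ins, List.drop_append, hl]
  simp [show g + 2 - g = 2 from by omega]

lemma stirling_zero {σ : List ℕ} : IsStirling0 0 σ ↔ σ = [1] := by
  constructor
  · intro h
    have hlen := stirling_length h
    simp only [Nat.mul_zero, Nat.zero_add] at hlen
    obtain ⟨x, rfl⟩ := List.length_eq_one_iff.1 hlen
    have := h.1 x
    simp [List.count_singleton] at this
    by_cases h1 : x = 1
    · rw [h1]
    · have := this h1
      split_ifs at this <;> omega
  · rintro rfl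
    constructor
    · intro m
      simp only [List.count_singleton, beq_iff_eq]
      split_ifs <;> omega
    · intro i s j h1 h2 h3 _
      simp at h3
      omega

def T : ℕ → Finset (List ℕ)
  | 0 => {[1]}
  | n + 1 => ((T n) ×ˢ Finset.range (2 * n + 2)).image fun p => ins (n + 2) p.2 p.1

lemma mem_T : ∀ (n : ℕ) (σ : List ℕ), σ ∈ T n ↔ IsStirling0 n σ := by
  intro n
  induction n with
  | zero =>
    intro σ
    rw [T, Finset.mem_singleton, stirling_zero]
  | succ n ih =>
    intro τ
    rw [T]
    simp only [Finset.mem_image, Finset.mem_product, Finset.mem_range, Prod.exists]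
    constructor
    · rintro ⟨σ, g, ⟨hσ, hg⟩, rfl⟩
      exact stirling_ins ((ih σ).1 hσ) (by omega)
    · intro hτ
      obtain ⟨σ, g, hσ, hg, rfl⟩ := stirling_split hτ
      exact ⟨σ, g, ⟨(ih σ).2 hσ, by omega⟩, rfl⟩

lemma ins_injOn (n : ℕ) :
    Set.InjOn (fun p : List ℕ × ℕ => ins (n + 2) p.2 p.1) ↑((T n) ×ˢ Finset.range (2 * n + 2)) := by
  rintro ⟨σ, g⟩ hp ⟨σ', g'⟩ hq h
  simp only [Finset.coe_product, Set.mem_prod, Finset.mem_coe, Finset.mem_range,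
    Finset.coe_range, Set.mem_Iio] at hp hq
  have hs := (mem_T n σ).1 hp.1
  have hs' := (mem_T n σ').1 hq.1
  have hl := stirling_length hs
  have hl' := stirling_length hs'
  have hgl : g ≤ σ.length := by omega
  have hgl' : g' ≤ σ'.length := by omega
  simp only at h
  have hgg : g = g' := by
    have h1 := indexOf_ins_self (n + 2) g σ (stirling_not_mem hs)
    have h2 := indexOf_ins_self (n + 2) g' σ' (stirling_not_mem hs')
    rw [h] at h1
    rw [h1] at h2
    omega
  subst hgg
  have htake : σ.take g = σ'.take g := by
    rw [← ins_take (n + 2) g σ hgl, ← ins_take (n + 2) g σ' hgl', h]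
  have hdrop : σ.drop g = σ'.drop g := by
    rw [← ins_drop (n + 2) g σ hgl, ← ins_drop (n + 2) g σ' hgl', h]
  have : σ = σ' := by
    rw [← List.take_append_drop g σ, ← List.take_append_drop g σ', htake, hdrop]
  rw [this]

lemma card_T : ∀ n : ℕ, (T n).card = 2 ^ n * n.factorial := by
  intro n
  induction n with
  | zero => rw [T]; rfl
  | succ n ih =>
    rw [T, Finset.card_image_of_injOn (ins_injOn n), Finset.card_product, ih,
      Finset.card_range, Nat.factorial_succ]
    ring


lemma evenS_ins {n g : ℕ} {σ : List ℕ} (h : IsStirling0 n σ) (hg : g ≤ 2 * n + 1) :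
    evenS (n + 1) (ins (n + 2) g σ) = evenS n σ + if g % 2 = 1 then 1 else 0 := by
  have hlen := stirling_length h
  have hgl : g ≤ σ.length := by omega
  have hv := stirling_not_mem h
  unfold evenS
  have hIcc : Finset.Icc 2 (n + 1 + 1) = insert (n + 2) (Finset.Icc 2 (n + 1)) := by
    ext x
    simp only [Finset.mem_Icc, Finset.mem_insert]
    omega
  rw [hIcc, Finset.filter_insert]
  have hidx : (ins (n + 2) g σ).idxOf (n + 2) = g := by
    rw [indexOf_ins_self _ _ _ hv]
    omega
  have hfilter : (Finset.Icc 2 (n + 1)).filter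
        (fun v => (ins (n + 2) g σ).idxOf v % 2 = 1) =
      (Finset.Icc 2 (n + 1)).filter (fun v => σ.idxOf v % 2 = 1) := by
    apply Finset.filter_congr
    intro x hx
    simp only [Finset.mem_Icc] at hx
    have hxmem : x ∈ σ := by
      apply List.count_pos_iff.1
      rw [h.1 x]
      split_ifs <;> omega
    rw [indexOf_ins_ne _ _ _ _ (by omega) hxmem]
    split_ifs with h1
    · rfl
    · simp [Nat.add_mod_right]
  have hnotmem : (n + 2) ∉ (Finset.Icc 2 (n + 1)).filter (fun v => σ.idxOf v % 2 = 1) := by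
    simp only [Finset.mem_filter, Finset.mem_Icc]
    omega
  rw [hidx, hfilter]
  split_ifs with h1
  · rw [Finset.card_insert_of_notMem hnotmem]
  · omega

lemma parity_sum (k e b : ℕ) (hb : b < 2) :
    ∑ g ∈ Finset.range (2 * k),
      (if (e + if g % 2 = 1 then 1 else 0) % 2 = b then 1 else 0) = k := by
  induction k with
  | zero => simp
  | succ k ih =>
    rw [show 2 * (k + 1) = (2 * k + 1) + 1 from by ring, Finset.sum_range_succ,
      Finset.sum_range_succ, ih]
    have e2 : (2 * k + 1) % 2 = 1 := by omega
    rw [if_neg (show ¬ (2 * k % 2 = 1) from by omega), if_pos e2]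
    rcases Nat.even_or_odd e with he | he
    · rw [Nat.even_iff] at he
      rcases (show b = 0 ∨ b = 1 from by omega) with rfl | rfl
      · rw [if_pos (by omega), if_neg (by omega)]
      · rw [if_neg (by omega), if_pos (by omega)]
    · rw [Nat.odd_iff] at he
      rcases (show b = 0 ∨ b = 1 from by omega) with rfl | rfl
      · rw [if_neg (by omega), if_pos (by omega)]
      · rw [if_pos (by omega), if_neg (by omega)]

lemma card_filter_T (n b : ℕ) (hb : b < 2) :
    ((T (n + 1)).filter fun σ => evenS (n + 1) σ % 2 = b).card =
      2 ^ n * (n + 1).factorial := by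
  rw [T, Finset.filter_image,
    Finset.card_image_of_injOn ((ins_injOn n).mono (by
      rw [Finset.coe_subset]; exact Finset.filter_subset _ _)),
    Finset.card_filter, Finset.sum_product]
  have hstep : ∀ σ ∈ T n,
      (∑ g ∈ Finset.range (2 * n + 2),
        if evenS (n + 1) (ins (n + 2) g σ) % 2 = b then 1 else 0) = n + 1 := by
    intro σ hσ
    have hs := (mem_T n σ).1 hσ
    have : ∀ g ∈ Finset.range (2 * n + 2),
        (if evenS (n + 1) (ins (n + 2) g σ) % 2 = b then 1 else 0) =
        (if (evenS n σ + if g % 2 = 1 then 1 else 0) % 2 = b then (1:ℕ) else 0) := by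
      intro g hg
      rw [Finset.mem_range] at hg
      rw [evenS_ins hs (by omega)]
    rw [Finset.sum_congr rfl this, show 2 * n + 2 = 2 * (n + 1) from by ring,
      parity_sum (n + 1) (evenS n σ) b hb]
  rw [Finset.sum_congr rfl hstep, Finset.sum_const, smul_eq_mul, card_T, Nat.factorial_succ]
  ring

theorem even_odd_split (n : ℕ) (hn : 1 ≤ n) :
    Set.ncard {σ : List ℕ | IsStirling0 n σ ∧ Odd (evenS n σ)} =
        2 ^ (n - 1) * n.factorial ∧
      Set.ncard {σ : List ℕ | IsStirling0 n σ ∧ Even (evenS n σ)} =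
        2 ^ (n - 1) * n.factorial := by
  obtain ⟨m, rfl⟩ : ∃ m, n = m + 1 := ⟨n - 1, by omega⟩
  constructor
  · have hset : {σ : List ℕ | IsStirling0 (m + 1) σ ∧ Odd (evenS (m + 1) σ)} =
        ↑((T (m + 1)).filter fun σ => evenS (m + 1) σ % 2 = 1) := by
      ext σ
      simp only [Set.mem_setOf_eq, Finset.coe_filter, mem_T, Nat.odd_iff]
    rw [hset, Set.ncard_coe_finset, card_filter_T m 1 (by omega)]
    simp
  · have hset : {σ : List ℕ | IsStirling0 (m + 1) σ ∧ Even (evenS (m + 1) σ)} =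
        ↑((T (m + 1)).filter fun σ => evenS (m + 1) σ % 2 = 0) := by
      ext σ
      simp only [Set.mem_setOf_eq, Finset.coe_filter, mem_T, Nat.even_iff]
    rw [hset, Set.ncard_coe_finset, card_filter_T m 0 (by omega)]
    simp
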